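/- Let ℤⁿ be the additive group of n-dimensional lattice points with the rectangular partial order, with positive cone ℕ₀ⁿ \ {0}. Let 𝒥 be the set of all downward closed nonempty finite subsets of ℕ₀ⁿ \ {0}, with associated density σ_𝒥. If A and B are subsets of ℕ₀ⁿ \ {0} with σ_𝒥(A) = α and σ_𝒥(B) = β, then σ_𝒥(A + B) ≥ α + β − αβ. -/

import Mathlib

/-- A subset `J` of the positive cone `ℕ₀ⁿ \ {0}` of `ℤⁿ` (with the rectangular,
i.e. coordinatewise, partial order) is downward closed if `x ∈ J` implies
`(0, x) ⊆ J`. -/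
def DownwardClosedZ {n : ℕ} (J : Set (Fin n → ℤ)) : Prop :=
  J ⊆ {x | 0 < x} ∧ ∀ x ∈ J, Set.Ioo (0 : Fin n → ℤ) x ⊆ J

/-- The collection of all downward closed nonempty finite subsets of
`ℕ₀ⁿ \ {0}`. -/
def latticeJ (n : ℕ) : Set (Set (Fin n → ℤ)) :=
  {J | J.Nonempty ∧ J.Finite ∧ DownwardClosedZ J}

/-- The density `σ_𝒥(A) = inf { |A ∩ J| / |J| : J ∈ 𝒥 }` determined by a
collection `𝒥` of subsets of `X`. -/
noncomputable def densJ {X : Type*} (𝒥 : Set (Set X)) (A : Set X) : ℝ :=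
  sInf ((fun J => ((A ∩ J).ncard : ℝ) / (J.ncard : ℝ)) '' 𝒥)

/-- The sumset `A + B = {a + b : a ∈ A ∪ {0}, b ∈ B ∪ {0}}` of sets of
lattice points. -/
def sumsetZ {n : ℕ} (A B : Set (Fin n → ℤ)) : Set (Fin n → ℤ) :=
  {x | ∃ a ∈ A ∪ {0}, ∃ b ∈ B ∪ {0}, a + b = x}

lemma left_subset_sumsetZ {n : ℕ} (A B : Set (Fin n → ℤ)) : A ⊆ sumsetZ A B :=
  fun x hx => ⟨x, Or.inl hx, 0, Or.inr rfl, add_zero x⟩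

lemma right_subset_sumsetZ {n : ℕ} (A B : Set (Fin n → ℤ)) : B ⊆ sumsetZ A B :=
  fun x hx => ⟨0, Or.inr rfl, x, Or.inl hx, zero_add x⟩

lemma add_mem_sumsetZ {n : ℕ} {A B : Set (Fin n → ℤ)} {a b : Fin n → ℤ}
    (ha : a ∈ A) (hb : b ∈ B) : a + b ∈ sumsetZ A B :=
  ⟨a, Or.inl ha, b, Or.inl hb, rfl⟩

/-- The key counting lemma. -/
lemma key_count (n : ℕ) (A B : Set (Fin n → ℤ)) (β : ℝ)
    (Hβ : ∀ E ∈ latticeJ n, β * (E.ncard : ℝ) ≤ ((B ∩ E).ncard : ℝ)) :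
    ∀ (k : ℕ) (J : Set (Fin n → ℤ)), J.Finite → J ⊆ {x | 0 < x} →
      (∀ x ∈ J, Set.Ioo (0 : Fin n → ℤ) x ⊆ J) → (A ∩ J).ncard = k →
      (1 - β) * ((A ∩ J).ncard : ℝ) + β * (J.ncard : ℝ)
        ≤ ((sumsetZ A B ∩ J).ncard : ℝ) := by
  intro k
  induction k with
  | zero =>
    intro J hJf hJc hJd hk
    have hAJ : A ∩ J = ∅ := (Set.ncard_eq_zero (hJf.subset Set.inter_subset_right)).mp hk
    rw [hAJ]
    simp only [Set.ncard_empty, Nat.cast_zero, mul_zero, zero_add]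
    rcases Set.eq_empty_or_nonempty J with h | h
    · simp [h]
    · have hmem : J ∈ latticeJ n := ⟨h, hJf, hJc, hJd⟩
      refine (Hβ J hmem).trans ?_
      have : (B ∩ J).ncard ≤ (sumsetZ A B ∩ J).ncard :=
        Set.ncard_le_ncard (Set.inter_subset_inter_left J (right_subset_sumsetZ A B))
          (hJf.subset Set.inter_subset_right)
      exact_mod_cast this
  | succ k ih =>
    intro J hJf hJc hJd hk
    -- pick a maximal element of A ∩ J
    have hAJf : (A ∩ J).Finite := hJf.subset Set.inter_subset_right
    have hne : (A ∩ J).Nonempty := by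
      rw [Set.nonempty_iff_ne_empty]
      intro h
      rw [h, Set.ncard_empty] at hk
      exact (Nat.succ_ne_zero k) hk.symm
    obtain ⟨a, haAJ, hmax⟩ := Set.Finite.exists_maximalFor id _ hAJf hne
    simp only [id] at hmax
    set U : Set (Fin n → ℤ) := {x ∈ J | a ≤ x} with hU
    set J' : Set (Fin n → ℤ) := J \ U with hJ'
    set E : Set (Fin n → ℤ) := {y | 0 < y ∧ a + y ∈ J} with hE
    have haJ : a ∈ J := haAJ.2
    have haU : a ∈ U := ⟨haJ, le_refl a⟩
    have hUJ : U ⊆ J := fun x hx => hx.1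
    have hUf : U.Finite := hJf.subset hUJ
    have hJ'f : J'.Finite := hJf.subset Set.diff_subset
    -- A ∩ U = {a}
    have hAU : A ∩ U = {a} := by
      apply Set.eq_singleton_iff_unique_mem.mpr
      refine ⟨⟨haAJ.1, haU⟩, ?_⟩
      rintro b ⟨hbA, hbJ, hab⟩
      exact le_antisymm (hmax ⟨hbA, hbJ⟩ hab) hab
    -- A ∩ J' = (A ∩ J) \ {a}
    have hAJ' : A ∩ J' = (A ∩ J) \ {a} := by
      ext x
      simp only [hJ', Set.mem_inter_iff, Set.mem_diff, Set.mem_singleton_iff]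
      constructor
      · rintro ⟨hxA, hxJ, hxU⟩
        exact ⟨⟨hxA, hxJ⟩, fun h => hxU (h ▸ haU)⟩
      · rintro ⟨⟨hxA, hxJ⟩, hxa⟩
        refine ⟨hxA, hxJ, fun hxU => hxa ?_⟩
        have : x ∈ A ∩ U := ⟨hxA, hxU⟩
        rwa [hAU, Set.mem_singleton_iff] at this
    have hAJ'card : (A ∩ J').ncard = k := by
      rw [hAJ']
      have := Set.ncard_diff_singleton_add_one haAJ hAJf
      omega
    -- J' is downward closed
    have hJ'c : J' ⊆ {x | 0 < x} := Set.diff_subset.trans hJc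
    have hJ'd : ∀ x ∈ J', Set.Ioo (0 : Fin n → ℤ) x ⊆ J' := by
      rintro x ⟨hxJ, hxU⟩ y hy
      refine ⟨hJd x hxJ hy, fun hyU => hxU ⟨hxJ, hyU.2.trans hy.2.le⟩⟩
    have IH := ih J' hJ'f hJ'c hJ'd hAJ'card
    -- the translated set E
    have ha0 : (0 : Fin n → ℤ) ≤ a := (hJc haJ).le
    have himg : (fun y => a + y) '' E = U \ {a} := by
      ext x
      constructor
      · rintro ⟨y, ⟨hy0, hyJ⟩, rfl⟩
        refine ⟨⟨hyJ, le_add_of_nonneg_right hy0.le⟩, ?_⟩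
        simp only [Set.mem_singleton_iff]
        intro h
        have : y = 0 := by
          have := congrArg (fun z => z - a) h
          simpa using this
        exact hy0.ne' this
      · rintro ⟨⟨hxJ, hax⟩, hxa⟩
        refine ⟨x - a, ⟨?_, by simpa using hxJ⟩, by ring⟩
        refine lt_of_le_of_ne (by simpa using hax) ?_
        intro h
        apply hxa
        have := congrArg (fun z => a + z) h
        simpa using this.symm
    have hinj : Function.Injective (fun y : Fin n → ℤ => a + y) := fun u v h => by
      simpa using congrArg (fun z => z - a) h
    have hEf : E.Finite := by
      have : ((fun y => a + y) '' E).Finite := himg ▸ hUf.subset Set.diff_subset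
      exact Set.Finite.of_finite_image this hinj.injOn
    have hEcard : E.ncard + 1 = U.ncard := by
      have h1 : ((fun y => a + y) '' E).ncard = E.ncard := Set.ncard_image_of_injective E hinj
      rw [himg] at h1
      rw [← h1]
      exact Set.ncard_diff_singleton_add_one haU hUf
    -- E is downward closed, so β * |E| ≤ |B ∩ E|
    have hEbound : β * (E.ncard : ℝ) ≤ ((B ∩ E).ncard : ℝ) := by
      rcases Set.eq_empty_or_nonempty E with h | h
      · simp [h]
      · refine Hβ E ⟨h, hEf, fun y hy => hy.1, ?_⟩
        rintro y ⟨hy0, hyJ⟩ z hz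
        refine ⟨hz.1, hJd _ hyJ ⟨?_, ?_⟩⟩
        · exact lt_of_lt_of_le hz.1 (le_add_of_nonneg_left ha0)
        · exact add_lt_add_right hz.2 a
    -- lower bound for |C ∩ U|
    have hCU : ((B ∩ E).ncard : ℝ) + 1 ≤ ((sumsetZ A B ∩ U).ncard : ℝ) := by
      have hsub : insert a ((fun y => a + y) '' (B ∩ E)) ⊆ sumsetZ A B ∩ U := by
        rintro x (rfl | ⟨y, ⟨hyB, hyE⟩, rfl⟩)
        · exact ⟨left_subset_sumsetZ A B haAJ.1, haU⟩
        · refine ⟨add_mem_sumsetZ haAJ.1 hyB, hyE.2, le_add_of_nonneg_right hyE.1.le⟩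
      have hnotmem : a ∉ (fun y => a + y) '' (B ∩ E) := by
        rintro ⟨y, ⟨hyB, hyE⟩, h⟩
        exact hyE.1.ne (by simpa using congrArg (fun z => z - a) h.symm)
      have hBEf : (B ∩ E).Finite := hEf.subset Set.inter_subset_right
      have hcard : (insert a ((fun y => a + y) '' (B ∩ E))).ncard = (B ∩ E).ncard + 1 := by
        rw [Set.ncard_insert_of_notMem hnotmem (hBEf.image _),
          Set.ncard_image_of_injective _ hinj]
      have hle : (insert a ((fun y => a + y) '' (B ∩ E))).ncard ≤ (sumsetZ A B ∩ U).ncard :=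
        Set.ncard_le_ncard hsub (hUf.subset Set.inter_subset_right)
      rw [hcard] at hle
      exact_mod_cast hle
    -- split the counts
    have hJsplit : J'.ncard + U.ncard = J.ncard :=
      Set.ncard_diff_add_ncard_of_subset hUJ hJf
    have hCsplit : (sumsetZ A B ∩ J).ncard
        = (sumsetZ A B ∩ J').ncard + (sumsetZ A B ∩ U).ncard := by
      have hdisj : Disjoint (sumsetZ A B ∩ J') (sumsetZ A B ∩ U) := by
        apply Set.disjoint_of_subset Set.inter_subset_right Set.inter_subset_right
        exact Set.disjoint_sdiff_left
      have hunion : sumsetZ A B ∩ J = (sumsetZ A B ∩ J') ∪ (sumsetZ A B ∩ U) := by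
        rw [← Set.inter_union_distrib_left, Set.diff_union_of_subset hUJ]
      rw [hunion, Set.ncard_union_eq hdisj (hJ'f.subset Set.inter_subset_right)
        (hUf.subset Set.inter_subset_right)]
    -- put everything together
    rw [hk, hCsplit]
    push_cast
    rw [hAJ'card] at IH
    have e1 : (U.ncard : ℝ) = (E.ncard : ℝ) + 1 := by exact_mod_cast hEcard.symm
    have e2 : (J.ncard : ℝ) = (J'.ncard : ℝ) + (U.ncard : ℝ) := by exact_mod_cast hJsplit.symm
    have hb2 : β * ((J.ncard : ℕ) : ℝ) = β * (J'.ncard : ℝ) + β * (U.ncard : ℝ) := by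
      rw [e2]; ring
    have hb1 : β * ((U.ncard : ℕ) : ℝ) = β * (E.ncard : ℝ) + β := by rw [e1]; ring
    linarith [IH, hCU, hEbound, hb1, hb2]

/-- Shnirel'man's inequality for lattice points: if `A, B ⊆ ℕ₀ⁿ \ {0}` with
`σ_𝒥(A) = α` and `σ_𝒥(B) = β`, then `σ_𝒥(A + B) ≥ α + β - αβ`. -/
theorem lattice_shnirelman_inequality
    (n : ℕ) (A B : Set (Fin n → ℤ))
    (hA : A ⊆ {x | 0 < x}) (hB : B ⊆ {x | 0 < x})
    (α β : ℝ) (hα : densJ (latticeJ n) A = α) (hβ : densJ (latticeJ n) B = β) :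
    densJ (latticeJ n) (sumsetZ A B) ≥ α + β - α * β := by
  rcases Set.eq_empty_or_nonempty (latticeJ n) with hemp | hne
  · subst hα hβ
    simp [densJ, hemp, Real.sInf_empty]
  · -- bounds on elements of the defining sets
    have hbdd : ∀ (C : Set (Fin n → ℤ)),
        BddBelow ((fun J => ((C ∩ J).ncard : ℝ) / (J.ncard : ℝ)) '' latticeJ n) := by
      intro C
      refine ⟨0, ?_⟩
      rintro x ⟨J, _, rfl⟩
      positivity
    have hle : ∀ (C : Set (Fin n → ℤ)), ∀ J ∈ latticeJ n,
        densJ (latticeJ n) C ≤ ((C ∩ J).ncard : ℝ) / (J.ncard : ℝ) := by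
      intro C J hJ
      exact csInf_le (hbdd C) ⟨J, hJ, rfl⟩
    have hpos : ∀ J ∈ latticeJ n, 0 < (J.ncard : ℝ) := by
      rintro J ⟨hne', hfin, _⟩
      exact_mod_cast (Set.ncard_pos hfin).mpr hne'
    -- β ≤ 1
    obtain ⟨J₀, hJ₀⟩ := hne
    have hβ1 : β ≤ 1 := by
      rw [← hβ]
      refine (hle B J₀ hJ₀).trans ?_
      rw [div_le_one (hpos J₀ hJ₀)]
      exact_mod_cast Set.ncard_le_ncard Set.inter_subset_right hJ₀.2.1
    have Hβ : ∀ E ∈ latticeJ n, β * (E.ncard : ℝ) ≤ ((B ∩ E).ncard : ℝ) := by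
      intro E hE
      rw [← hβ]
      rw [← le_div_iff₀ (hpos E hE)]
      exact hle B E hE
    have Hα : ∀ J ∈ latticeJ n, α * (J.ncard : ℝ) ≤ ((A ∩ J).ncard : ℝ) := by
      intro J hJ
      rw [← hα, ← le_div_iff₀ (hpos J hJ)]
      exact hle A J hJ
    rw [ge_iff_le, densJ]
    apply le_csInf
    · exact ⟨_, ⟨J₀, hJ₀, rfl⟩⟩
    · rintro x ⟨J, hJ, rfl⟩
      obtain ⟨hJne, hJf, hJc, hJd⟩ := hJ
      have hkey := key_count n A B β Hβ ((A ∩ J).ncard) J hJf hJc hJd rfl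
      have hJpos : (0 : ℝ) < J.ncard := hpos J ⟨hJne, hJf, hJc, hJd⟩
      rw [le_div_iff₀ hJpos]
      have hαJ : α * (J.ncard : ℝ) ≤ ((A ∩ J).ncard : ℝ) := Hα J ⟨hJne, hJf, hJc, hJd⟩
      nlinarith [hkey, hαJ, hβ1, hJpos]
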